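/- Let λ₀, β ∈ kˣ, α ∈ Lˣ and let d be a positive integer such that N_{L/k}(α) = λ₀^{n+1}·β^d. Define the polynomial F := λ₀·X₀^d + Σ_{i=1}^{n} (λ₀^{1−i}·∏_{j=0}^{i−1} σʲ(α))·X_i^d in L[X₀,…,X_n]. Then substituting X₀ ↦ β·X_n and X_i ↦ X_{i−1} for 1 ≤ i ≤ n into F yields (α/λ₀)·F^σ, where F^σ denotes the polynomial obtained from F by applying σ to its coefficients. (This says the matrix C_β defines an isomorphism from the hypersurface F = 0 onto its Galois conjugate F^σ = 0.) -/
import Mathlib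


set_option maxRecDepth 4000 in
/-- Let `L/k` be a cyclic Galois extension of degree `n+1` with generator `σ`, let
`λ₀, β ∈ kˣ`, `α ∈ Lˣ` and `d ≥ 1` with `N_{L/k}(α) = λ₀^{n+1} β^d`.  For the diagonal
form `F = λ₀ X₀^d + ∑_{i=1}^{n} (λ₀^{1-i} ∏_{j=0}^{i-1} σʲ(α)) Xᵢ^d`, the substitution
`X₀ ↦ β Xₙ, Xᵢ ↦ X_{i-1}` carries `F` to `(α/λ₀) · F^σ`, where `F^σ` is obtained by
applying `σ` to the coefficients of `F`.  (In other words, the matrix `C_β` defines an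
isomorphism from the hypersurface `F = 0` onto its Galois conjugate `F^σ = 0`.) -/
theorem diagonal_hypersurface_conjugate
    (k L : Type*) [Field k] [Field L] [Algebra k L]
    [FiniteDimensional k L] [IsGalois k L]
    (n : ℕ) (hn : 1 ≤ n) (hdeg : Module.finrank k L = n + 1)
    (σ : L ≃ₐ[k] L) (hσ : ∀ τ : L ≃ₐ[k] L, τ ∈ Subgroup.zpowers σ)
    (lam₀ β : k) (hlam₀ : lam₀ ≠ 0) (hβ : β ≠ 0)
    (α : L) (hα : α ≠ 0) (d : ℕ) (hd : 0 < d)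
    (hnorm : (∏ j ∈ Finset.range (n + 1), (σ ^ j) α)
      = algebraMap k L lam₀ ^ (n + 1) * algebraMap k L β ^ d) :
    (MvPolynomial.aeval
        (Fin.cases (MvPolynomial.C (algebraMap k L β) * MvPolynomial.X (Fin.last n))
          (fun j : Fin n => MvPolynomial.X j.castSucc)
          : Fin (n + 1) → MvPolynomial (Fin (n + 1)) L))
      (MvPolynomial.C (algebraMap k L lam₀) * MvPolynomial.X 0 ^ d
        + ∑ i : Fin n, MvPolynomial.C
            (algebraMap k L lam₀ ^ (-(i : ℤ)) *
              ∏ j ∈ Finset.range ((i : ℕ) + 1), (σ ^ j) α) *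
            MvPolynomial.X i.succ ^ d)
    = MvPolynomial.C (α / algebraMap k L lam₀) *
        MvPolynomial.map (σ : L →+* L)
          (MvPolynomial.C (algebraMap k L lam₀) * MvPolynomial.X 0 ^ d
            + ∑ i : Fin n, MvPolynomial.C
                (algebraMap k L lam₀ ^ (-(i : ℤ)) *
                  ∏ j ∈ Finset.range ((i : ℕ) + 1), (σ ^ j) α) *
                MvPolynomial.X i.succ ^ d) := by
  obtain ⟨m, rfl⟩ : ∃ m, n = m + 1 := ⟨n - 1, (Nat.succ_pred_eq_of_pos hn).symm⟩
  have hA : algebraMap k L lam₀ ≠ 0 := by simp [hlam₀]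
  have hσalg : ∀ x : k, (σ : L →+* L) (algebraMap k L x) = algebraMap k L x := fun x => σ.commutes x
  have hkey : ∀ s : ℕ, (σ : L →+* L) (∏ t ∈ Finset.range s, (σ ^ t) α) * α
      = ∏ t ∈ Finset.range (s + 1), (σ ^ t) α := by
    intro s
    rw [Finset.prod_range_succ', map_prod]
    refine congrArg₂ (· * ·)
      (Finset.prod_congr rfl fun t _ => by rw [pow_succ']; rfl) (by simp)
  have hkey' : ∀ s : ℕ, (σ : L →+* L) (∏ t ∈ Finset.range s, (σ ^ t) α)
      = (∏ t ∈ Finset.range (s + 1), (σ ^ t) α) / α := fun s =>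
    (eq_div_iff hα).2 (hkey s)
  simp only [map_add, map_mul, map_pow, map_sum, MvPolynomial.aeval_C, MvPolynomial.aeval_X,
    Fin.cases_zero, Fin.cases_succ, MvPolynomial.map_C, MvPolynomial.map_X,
    hσalg, map_zpow₀, MvPolynomial.algebraMap_eq]
  conv_lhs => rw [Fin.sum_univ_succ]
  conv_rhs => rw [Fin.sum_univ_castSucc]
  simp only [Fin.castSucc_zero, Fin.succ_last, Fin.succ_castSucc, Fin.val_succ, Fin.val_zero,
    Fin.coe_castSucc, Fin.val_last, Nat.cast_zero, neg_zero, zpow_zero, one_mul, mul_pow,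
    mul_add, Finset.mul_sum, ← mul_assoc, ← MvPolynomial.C_mul, hkey']
  have e3 : ∀ x : ℕ, α / algebraMap k L lam₀ * algebraMap k L lam₀ ^ (-(x : ℤ)) *
      ((∏ t ∈ Finset.range (x + 1 + 1), (σ ^ t) α) / α)
      = algebraMap k L lam₀ ^ (-(((x + 1 : ℕ)) : ℤ)) *
        ∏ t ∈ Finset.range (x + 1 + 1), (σ ^ t) α := by
    intro x
    rw [zpow_neg, zpow_neg, zpow_natCast, zpow_natCast]
    field_simp
    ring
  have e4 : algebraMap k L lam₀ ^ (-(((m + 1 : ℕ)) : ℤ)) *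
      ∏ t ∈ Finset.range (m + 1 + 1), (σ ^ t) α
      = algebraMap k L lam₀ * algebraMap k L β ^ d := by
    rw [hnorm, zpow_neg, zpow_natCast]
    field_simp
    ring
  simp only [e3, e4, div_mul_cancel₀ α hA, Nat.succ_eq_add_one, map_mul, map_pow,
    show (∏ j ∈ Finset.range (0 + 1), (σ ^ j) α) = α from by simp]
  ring
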